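/- Under the hypotheses of the previous two results (r ≥ 2d+2 hidden neurons, X = [x_1^{⊗2},...,x_n^{⊗2}] of full column rank with σ_min(X) ≥ σ), if λ_min(∇²f(W)) ≥ −ε then f(W) ≤ n d ε² / (4σ²). In particular every second-order stationary point of f is a global minimum with f(W) = 0. -/

import Mathlib

open Finset


lemma aux_dep (d m : ℕ) (hdm : d < m) (w : Fin m → Fin d → ℝ) :
    ∃ c : Fin m → ℝ, c ≠ 0 ∧ ∀ k, ∑ i, c i * w i k = 0 := by
  let φ : (Fin m → ℝ) →ₗ[ℝ] (Fin d → ℝ) :=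
    { toFun := fun c k => ∑ i, c i * w i k
      map_add' := by
        intro u v; funext k
        simp [add_mul, Finset.sum_add_distrib]
      map_smul' := by
        intro t v; funext k
        simp [Finset.mul_sum, mul_assoc] }
  by_contra h
  push_neg at h
  have hinj : Function.Injective φ := by
    rw [← LinearMap.ker_eq_bot, LinearMap.ker_eq_bot']
    intro c hc
    by_contra hc0
    obtain ⟨k, hk⟩ := h c hc0
    exact hk (congrFun hc k)
  have := LinearMap.finrank_le_finrank_of_injective hinj
  simp [Module.finrank_fin_fun] at this
  omega


lemma plug (d r n : ℕ) (a : Fin r → ℝ) (W : Fin r → Fin d → ℝ)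
    (x : Fin n → Fin d → ℝ) (M : Matrix (Fin d) (Fin d) ℝ)
    (Q : (Fin r → Fin d → ℝ) → ℝ)
    (hQ : ∀ Z, Q Z = (∑ k, a k * ∑ k1, ∑ k2, Z k k1 * M k1 k2 * Z k k2)
      + (2 / (n : ℝ)) * ∑ j,
          (∑ i, a i * (∑ k, W i k * x j k) * (∑ k, x j k * Z i k)) ^ 2)
    (s : ℝ) (e : Fin (d+1) → Fin r) (he : Function.Injective e)
    (hs : ∀ t, a (e t) = s)
    (ε' : ℝ) (hh : ∀ Z : Fin r → Fin d → ℝ, -ε' * (∑ i, ∑ k, Z i k ^ 2) ≤ Q Z)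
    (v : Fin d → ℝ) :
    -ε' * (∑ k, v k ^ 2) ≤ s * ∑ k1, ∑ k2, v k1 * M k1 k2 * v k2 := by
  obtain ⟨c', hc'ne, hc'sum⟩ := aux_dep d (d+1) (Nat.lt_succ_self d) (fun t => W (e t))
  set T := ∑ k1, ∑ k2, v k1 * M k1 k2 * v k2 with hT
  set c : Fin r → ℝ := fun i => ∑ t, if i = e t then c' t else 0 with hc
  have hce : ∀ t, c (e t) = c' t := by
    intro t
    simp only [hc]
    rw [Finset.sum_eq_single t]
    · simp
    · intro t' _ hne
      rw [if_neg (fun hEq => hne (he hEq).symm)]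
    · simp
  have hcz : ∀ i, c i ≠ 0 → ∃ t, i = e t := by
    intro i hi
    by_contra hno
    push_neg at hno
    exact hi (Finset.sum_eq_zero fun t _ => if_neg (hno t))
  have hac : ∀ i, a i * c i = s * c i := by
    intro i
    by_cases hi : c i = 0
    · rw [hi]; ring
    · obtain ⟨t, rfl⟩ := hcz i hi; rw [hs t]
  have hWc : ∀ k, ∑ i, c i * W i k = 0 := by
    intro k
    have h1 : ∑ i, c i * W i k = ∑ t, c' t * W (e t) k := by
      simp only [hc, Finset.sum_mul]
      rw [Finset.sum_comm]
      refine Finset.sum_congr rfl fun t _ => ?_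
      rw [Finset.sum_eq_single (e t)]
      · simp
      · intro i _ hne; simp [if_neg hne]
      · simp
    rw [h1]; exact hc'sum k
  have csq_pos : 0 < ∑ i, c i ^ 2 := by
    have hex : ∃ t, c' t ≠ 0 := by
      by_contra hall; push_neg at hall; exact hc'ne (funext hall)
    obtain ⟨t, ht⟩ := hex
    have hne : c (e t) ≠ 0 := by rw [hce]; exact ht
    have h1 : 0 < c (e t) ^ 2 := lt_of_le_of_ne (sq_nonneg _) (Ne.symm (pow_ne_zero 2 hne))
    exact Finset.sum_pos' (fun i _ => sq_nonneg _) ⟨e t, Finset.mem_univ _, h1⟩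
  set Z : Fin r → Fin d → ℝ := fun i k => c i * v k with hZ
  have hnorm : ∑ i, ∑ k, Z i k ^ 2 = (∑ i, c i ^ 2) * (∑ k, v k ^ 2) := by
    rw [Finset.sum_mul]
    refine Finset.sum_congr rfl fun i _ => ?_
    rw [Finset.mul_sum]
    exact Finset.sum_congr rfl fun k _ => by simp only [hZ]; ring
  have hQZ : Q Z = s * ((∑ i, c i ^ 2) * T) := by
    rw [hQ]
    have h1 : ∀ i : Fin r, (∑ k1, ∑ k2, Z i k1 * M k1 k2 * Z i k2) = c i ^ 2 * T := by
      intro i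
      rw [hT, Finset.mul_sum]
      refine Finset.sum_congr rfl fun k1 _ => ?_
      rw [Finset.mul_sum]
      exact Finset.sum_congr rfl fun k2 _ => by simp only [hZ]; ring
    have h2 : ∀ j, (∑ i, a i * (∑ k, W i k * x j k) * (∑ k, x j k * Z i k)) = 0 := by
      intro j
      have key : ∑ i, c i * (∑ k, W i k * x j k) = 0 := by
        calc ∑ i, c i * (∑ k, W i k * x j k)
            = ∑ i, ∑ k, c i * W i k * x j k := by
              refine Finset.sum_congr rfl fun i _ => ?_
              rw [Finset.mul_sum]
              exact Finset.sum_congr rfl fun k _ => by ring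
          _ = ∑ k, ∑ i, c i * W i k * x j k := Finset.sum_comm
          _ = ∑ k, (∑ i, c i * W i k) * x j k := by
              refine Finset.sum_congr rfl fun k _ => ?_
              rw [Finset.sum_mul]
          _ = 0 := by simp [hWc]
      calc ∑ i, a i * (∑ k, W i k * x j k) * (∑ k, x j k * Z i k)
          = ∑ i, (s * (∑ k, x j k * v k)) * (c i * (∑ k, W i k * x j k)) := by
            refine Finset.sum_congr rfl fun i _ => ?_
            have hx : (∑ k, x j k * Z i k) = c i * ∑ k, x j k * v k := by
              rw [Finset.mul_sum]
              exact Finset.sum_congr rfl fun k _ => by simp only [hZ]; ring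
            rw [hx]
            linear_combination ((∑ k, W i k * x j k) * (∑ k, x j k * v k)) * hac i
        _ = (s * (∑ k, x j k * v k)) * ∑ i, c i * (∑ k, W i k * x j k) :=
            (Finset.mul_sum _ _ _).symm
        _ = 0 := by rw [key, mul_zero]
    simp only [h1, h2]
    have h3 : ∑ i : Fin r, a i * (c i ^ 2 * T) = s * ((∑ i, c i ^ 2) * T) := by
      calc ∑ i : Fin r, a i * (c i ^ 2 * T)
          = ∑ i : Fin r, s * (c i ^ 2 * T) := by
            refine Finset.sum_congr rfl fun i _ => ?_
            linear_combination (c i * T) * hac i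
        _ = s * ((∑ i, c i ^ 2) * T) := by rw [← Finset.mul_sum, ← Finset.sum_mul]
    rw [h3]
    norm_num
  have hfin := hh Z
  rw [hQZ, hnorm] at hfin
  exact le_of_mul_le_mul_right (by linarith) csq_pos

lemma frob_bound (d : ℕ) (M : Matrix (Fin d) (Fin d) ℝ) (hsym : M.IsHermitian)
    (ε' : ℝ) (hε' : 0 ≤ ε')
    (hqf : ∀ v : Fin d → ℝ, |∑ k1, ∑ k2, v k1 * M k1 k2 * v k2| ≤ ε' * ∑ k, v k ^ 2) :
    ∑ k, ∑ l, M k l ^ 2 ≤ d * ε' ^ 2 := by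
  have heig : ∀ i, |hsym.eigenvalues i| ≤ ε' := by
    intro i
    set v : Fin d → ℝ := ⇑(hsym.eigenvectorBasis i) with hv
    have hv1 : ∑ k, v k ^ 2 = 1 := by
      have hn : ‖hsym.eigenvectorBasis i‖ = 1 := hsym.eigenvectorBasis.orthonormal.1 i
      have := EuclideanSpace.norm_eq (hsym.eigenvectorBasis i)
      rw [hn] at this
      have h2 : ∑ k, ‖hsym.eigenvectorBasis i k‖ ^ 2 = 1 := Real.sqrt_eq_one.mp this.symm
      simpa [hv, Real.norm_eq_abs, sq_abs] using h2
    have hmv : ∀ k1, (∑ k2, M k1 k2 * v k2) = hsym.eigenvalues i * v k1 := by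
      intro k1
      have := congrFun (hsym.mulVec_eigenvectorBasis i) k1
      simpa [Matrix.mulVec, dotProduct, hv] using this
    have hquad : (∑ k1, ∑ k2, v k1 * M k1 k2 * v k2) = hsym.eigenvalues i := by
      calc ∑ k1, ∑ k2, v k1 * M k1 k2 * v k2
          = ∑ k1, v k1 * (∑ k2, M k1 k2 * v k2) := by
            refine Finset.sum_congr rfl fun k1 _ => ?_
            rw [Finset.mul_sum]
            exact Finset.sum_congr rfl fun k2 _ => by ring
        _ = ∑ k1, hsym.eigenvalues i * v k1 ^ 2 := by
            refine Finset.sum_congr rfl fun k1 _ => ?_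
            rw [hmv k1]; ring
        _ = hsym.eigenvalues i := by rw [← Finset.mul_sum, hv1, mul_one]
    have := hqf v
    rw [hquad, hv1, mul_one] at this
    exact this
  have hMF : ∑ k, ∑ l, M k l ^ 2 = Matrix.trace (M * M) := by
    simp only [Matrix.trace, Matrix.diag, Matrix.mul_apply]
    refine Finset.sum_congr rfl fun k _ => Finset.sum_congr rfl fun l _ => ?_
    have hsymkl : M l k = M k l := by
      have := congrFun (congrFun hsym k) l
      simpa [Matrix.conjTranspose_apply] using this
    rw [hsymkl]; ring
  have hU : star (hsym.eigenvectorUnitary : Matrix (Fin d) (Fin d) ℝ) *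
      (hsym.eigenvectorUnitary : Matrix (Fin d) (Fin d) ℝ) = 1 := by
    exact Matrix.mem_unitaryGroup_iff'.mp hsym.eigenvectorUnitary.2
  have htr : Matrix.trace (M * M) = ∑ i, hsym.eigenvalues i ^ 2 := by
    set U := (hsym.eigenvectorUnitary : Matrix (Fin d) (Fin d) ℝ) with hUdef
    set D := Matrix.diagonal ((RCLike.ofReal : ℝ → ℝ) ∘ hsym.eigenvalues) with hDdef
    conv_lhs => rw [hsym.spectral_theorem, Unitary.conjStarAlgAut_apply]
    have h1 : star U * (U * D * star U) = D * star U := by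
      rw [← Matrix.mul_assoc, ← Matrix.mul_assoc, hU, Matrix.one_mul]
    have h2 : (U * D * star U) * (U * D * star U) = U * (D * D) * star U := by
      calc (U * D * star U) * (U * D * star U)
          = U * D * (star U * (U * D * star U)) := by rw [Matrix.mul_assoc]
        _ = U * D * (D * star U) := by rw [h1]
        _ = U * (D * D) * star U := by rw [Matrix.mul_assoc, Matrix.mul_assoc, Matrix.mul_assoc]
    rw [h2, Matrix.trace_mul_cycle, hU, Matrix.one_mul]
    simp [hDdef, Matrix.diagonal_mul_diagonal, Matrix.trace_diagonal, sq]
  rw [hMF, htr]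
  calc ∑ i, hsym.eigenvalues i ^ 2 ≤ ∑ _i : Fin d, ε' ^ 2 := by
        refine Finset.sum_le_sum fun i _ => ?_
        have := heig i
        nlinarith [abs_nonneg (hsym.eigenvalues i), sq_abs (hsym.eigenvalues i)]
    _ = d * ε' ^ 2 := by simp [Finset.sum_const, mul_comm]

/-- Landscape result: with `r ≥ 2d+2` and `σ_min(X) ≥ σ > 0`, if
`λ_min(∇²f(W)) ≥ −ε` (i.e. the Hessian quadratic form satisfies
`Q(Z) ≥ −ε‖Z‖_F²`), then `f(W) ≤ n d ε²/(4σ²)`; in particular, if the Hessian is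
positive semidefinite (second-order stationarity) then `f(W) = 0`. -/
theorem stmt_12 (d r n : ℕ) (hd : 0 < d) (hn : 0 < n)
    (hr : 2 * d + 2 ≤ r) (hre : Even r)
    (a : Fin r → ℝ) (ha : ∀ i, a i = if (i : ℕ) < r / 2 then 1 else -1)
    (x : Fin n → Fin d → ℝ) (y : Fin n → ℝ) (W : Fin r → Fin d → ℝ)
    (δ : Fin n → ℝ)
    (hδ : ∀ j, δ j = (∑ i, a i * (∑ k, W i k * x j k) ^ 2) - y j)
    (fW : ℝ) (hf : fW = (1 / (4 * (n : ℝ))) * ∑ j, δ j ^ 2)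
    (X : Matrix (Fin d × Fin d) (Fin n) ℝ)
    (hX : ∀ k l j, X (k, l) j = x j k * x j l)
    (M : Matrix (Fin d) (Fin d) ℝ)
    (hM : ∀ k l, M k l = (1 / (n : ℝ)) * ∑ j, δ j * x j k * x j l)
    (Q : (Fin r → Fin d → ℝ) → ℝ)
    (hQ : ∀ Z, Q Z = (∑ k, a k * ∑ k1, ∑ k2, Z k k1 * M k1 k2 * Z k k2)
      + (2 / (n : ℝ)) * ∑ j,
          (∑ i, a i * (∑ k, W i k * x j k) * (∑ k, x j k * Z i k)) ^ 2)
    (σ : ℝ) (hσ : 0 < σ)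
    (hXσ : ∀ v : Fin n → ℝ,
      σ * Real.sqrt (∑ j, v j ^ 2) ≤ Real.sqrt (∑ q, (X.mulVec v) q ^ 2))
    (ε : ℝ) (hε : 0 ≤ ε)
    (hhess : ∀ Z : Fin r → Fin d → ℝ, -ε * (∑ i, ∑ k, Z i k ^ 2) ≤ Q Z) :
    fW ≤ (n : ℝ) * d * ε ^ 2 / (4 * σ ^ 2) ∧
      ((∀ Z : Fin r → Fin d → ℝ, 0 ≤ Q Z) → fW = 0) := by
  
  obtain ⟨m, hm⟩ := hre
  have hr1 : d + 1 ≤ r / 2 := by omega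
  have hr2 : r / 2 + (d + 1) ≤ r := by omega
  set e1 : Fin (d + 1) → Fin r :=
    fun t => ⟨t.val, by have := t.isLt; omega⟩ with he1
  set e2 : Fin (d + 1) → Fin r :=
    fun t => ⟨r / 2 + t.val, by have := t.isLt; omega⟩ with he2
  have he1inj : Function.Injective e1 := by
    intro p q hpq
    simp only [he1, Fin.mk.injEq] at hpq
    exact Fin.ext hpq
  have he2inj : Function.Injective e2 := by
    intro p q hpq
    simp only [he2, Fin.mk.injEq] at hpq
    exact Fin.ext (by omega)
  have hs1 : ∀ t, a (e1 t) = 1 := by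
    intro t
    rw [ha]
    have := t.isLt
    simp only [he1]
    rw [if_pos (by omega)]
  have hs2 : ∀ t, a (e2 t) = -1 := by
    intro t
    rw [ha]
    simp only [he2]
    rw [if_neg (by omega)]
  have hn0 : (0:ℝ) < n := by exact_mod_cast hn
  have main : ∀ ε' : ℝ, 0 ≤ ε' →
      (∀ Z : Fin r → Fin d → ℝ, -ε' * (∑ i, ∑ k, Z i k ^ 2) ≤ Q Z) →
      fW ≤ (n : ℝ) * d * ε' ^ 2 / (4 * σ ^ 2) := by
    intro ε' hε'0 hh
    have hqf : ∀ v : Fin d → ℝ,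
        |∑ k1, ∑ k2, v k1 * M k1 k2 * v k2| ≤ ε' * ∑ k, v k ^ 2 := by
      intro v
      have hp := plug d r n a W x M Q hQ 1 e1 he1inj hs1 ε' hh v
      have hmn := plug d r n a W x M Q hQ (-1) e2 he2inj hs2 ε' hh v
      rw [abs_le]
      constructor
      · nlinarith [hp]
      · nlinarith [hmn]
    have hsym : M.IsHermitian := by
      rw [Matrix.IsHermitian]
      ext k l
      simp only [Matrix.conjTranspose_apply, star_trivial, hM]
      congr 1
      exact Finset.sum_congr rfl fun j _ => by ring
    have hfr := frob_bound d M hsym ε' hε'0 hqf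
    have hXδ : ∀ q : Fin d × Fin d, (X.mulVec δ) q = n * M q.1 q.2 := by
      rintro ⟨k, l⟩
      rw [hM]
      simp only [Matrix.mulVec, dotProduct, hX]
      rw [← mul_assoc]
      rw [show (n:ℝ) * (1 / n) = 1 from by field_simp, one_mul]
      exact Finset.sum_congr rfl fun j _ => by ring
    have hT : ∑ q, (X.mulVec δ) q ^ 2 = (n:ℝ) ^ 2 * ∑ k, ∑ l, M k l ^ 2 := by
      calc ∑ q, (X.mulVec δ) q ^ 2
          = ∑ q : Fin d × Fin d, (n:ℝ) ^ 2 * M q.1 q.2 ^ 2 := by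
            refine Finset.sum_congr rfl fun q _ => ?_
            rw [hXδ q]; ring
        _ = (n:ℝ) ^ 2 * ∑ k, ∑ l, M k l ^ 2 := by
            rw [← Finset.mul_sum, Fintype.sum_prod_type]
    have hXb := hXσ δ
    have hSnn : (0:ℝ) ≤ ∑ j, δ j ^ 2 := by positivity
    have hS : σ ^ 2 * (∑ j, δ j ^ 2) ≤ (n:ℝ) ^ 2 * ((d:ℝ) * ε' ^ 2) := by
      have hnn : (0:ℝ) ≤ ∑ q, (X.mulVec δ) q ^ 2 := by positivity
      have hl : (0:ℝ) ≤ σ * Real.sqrt (∑ j, δ j ^ 2) := by positivity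
      have hsq := mul_self_le_mul_self hl hXb
      rw [Real.mul_self_sqrt hnn, hT] at hsq
      have e3 : (σ * Real.sqrt (∑ j, δ j ^ 2)) * (σ * Real.sqrt (∑ j, δ j ^ 2))
          = σ ^ 2 * (∑ j, δ j ^ 2) := by
        calc (σ * Real.sqrt (∑ j, δ j ^ 2)) * (σ * Real.sqrt (∑ j, δ j ^ 2))
            = σ ^ 2 * (Real.sqrt (∑ j, δ j ^ 2) * Real.sqrt (∑ j, δ j ^ 2)) := by ring
          _ = σ ^ 2 * (∑ j, δ j ^ 2) := by rw [Real.mul_self_sqrt hSnn]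
      rw [e3] at hsq
      nlinarith [hfr, sq_nonneg (n:ℝ)]
    rw [hf]
    rw [show (1 / (4 * (n:ℝ))) * ∑ j, δ j ^ 2 = (∑ j, δ j ^ 2) / (4 * n) from by ring,
      div_le_div_iff₀ (by positivity) (by positivity)]
    nlinarith [hS]
  refine ⟨main ε hε hhess, fun hQ0 => ?_⟩
  have h0 := main 0 le_rfl (fun Z => by simpa using hQ0 Z)
  have hub : fW ≤ 0 := by simpa using h0
  have hlb : 0 ≤ fW := by rw [hf]; positivity
  linarith
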